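/- Let A = ((a_n, r_n)) be an abstract Swiss cheese with ρ(A) < ∞. Then there exists a redundancy-free abstract Swiss cheese B = ((b_n, s_n)) such that the sequence (s_n)_{n ≥ 1} is non-increasing, ρ(B) ≤ ρ(A), X_B = X_A, closedBall(b_0, s_0) = closedBall(a_0, r_0), and for every open set U ⊆ ℂ one has ρ_U(B) ≤ ρ_U(A). -/

import Mathlib

open Metric Set

/-- An abstract Swiss cheese: a sequence `((a_n, r_n))_{n ≥ 0}` of centres `a n ∈ ℂ` and
non-negative radii `r n ∈ [0, ∞)`. -/
structure SwissCheese where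
  a : ℕ → ℂ
  r : ℕ → ℝ
  r_nonneg : ∀ n, 0 ≤ r n

namespace SwissCheese

/-- The associated Swiss cheese set `X_A = closedBall(a₀, r₀) ∖ ⋃_{n ≥ 1} ball(a_n, r_n)`. -/
def cheeseSet (A : SwissCheese) : Set ℂ :=
  closedBall (A.a 0) (A.r 0) \ ⋃ n ∈ Set.Ici 1, ball (A.a n) (A.r n)

/-- The significant index set `S_A = {n ≥ 1 : r_n > 0}`. -/
def sig (A : SwissCheese) : Set ℕ := {n | 1 ≤ n ∧ 0 < A.r n}

/-- The radius sum `ρ(A) = ∑_{n ≥ 1} r_n` is finite. -/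
def RadSummable (A : SwissCheese) : Prop := Summable fun n => A.r (n + 1)

/-- The radius sum `ρ(A) = ∑_{n ≥ 1} r_n`. -/
noncomputable def radSum (A : SwissCheese) : ℝ := ∑' n, A.r (n + 1)

/-- The discrepancy `δ₁(A) = r₀ − ∑_{n ≥ 1} r_n`. -/
noncomputable def disc (A : SwissCheese) : ℝ := A.r 0 - A.radSum

/-- `A` is classical: `ρ(A) < ∞`, `r₀ > 0`, each significant closed disk is contained in
`ball(a₀, r₀)`, and distinct significant closed disks are disjoint. -/
def IsClassical (A : SwissCheese) : Prop :=
  A.RadSummable ∧ 0 < A.r 0 ∧ ∀ k ∈ A.sig,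
    closedBall (A.a k) (A.r k) ⊆ ball (A.a 0) (A.r 0) ∧
    ∀ l ∈ A.sig, l ≠ k → closedBall (A.a k) (A.r k) ∩ closedBall (A.a l) (A.r l) = ∅

/-- `A` is semiclassical: `ρ(A) < ∞`, `r₀ > 0`, each significant open disk is contained in
`ball(a₀, r₀)`, and distinct significant open disks are disjoint. -/
def IsSemiclassical (A : SwissCheese) : Prop :=
  A.RadSummable ∧ 0 < A.r 0 ∧ ∀ k ∈ A.sig,
    ball (A.a k) (A.r k) ⊆ ball (A.a 0) (A.r 0) ∧
    ∀ l ∈ A.sig, l ≠ k → ball (A.a k) (A.r k) ∩ ball (A.a l) (A.r l) = ∅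

/-- `A` is annular: `a₀ = a₁` and `r₀ > r₁ > 0`. -/
def IsAnnular (A : SwissCheese) : Prop := A.a 0 = A.a 1 ∧ A.r 1 < A.r 0 ∧ 0 < A.r 1

/-- The annular radius sum `ρ_ann(A) = ∑_{n ≥ 2} r_n`. -/
noncomputable def annRadSum (A : SwissCheese) : ℝ := ∑' n, A.r (n + 2)

/-- The annular discrepancy `δ_ann(A) = r₀ − r₁ − 2 ∑_{n ≥ 2} r_n`. -/
noncomputable def annDisc (A : SwissCheese) : ℝ := A.r 0 - A.r 1 - 2 * A.annRadSum

/-- `A` is redundancy-free: every significant open disk meets `closedBall(a₀, r₀)`, and no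
significant open disk is contained in another one. -/
def IsRedundancyFree (A : SwissCheese) : Prop :=
  ∀ k ∈ A.sig, (ball (A.a k) (A.r k) ∩ closedBall (A.a 0) (A.r 0)).Nonempty ∧
    ∀ l ∈ A.sig, l ≠ k → ¬ ball (A.a k) (A.r k) ⊆ ball (A.a l) (A.r l)

/-- `H_A(U)`: the set of significant indices whose closed disk meets `U`. -/
def HSet (A : SwissCheese) (U : Set ℂ) : Set ℕ :=
  {n | n ∈ A.sig ∧ (closedBall (A.a n) (A.r n) ∩ U).Nonempty}

/-- `ρ_U(A) = ∑_{n ∈ H_A(U)} r_n`. -/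
noncomputable def rhoU (A : SwissCheese) (U : Set ℂ) : ℝ := ∑' n : A.HSet U, A.r n

/-- The error set `E(A)`. -/
def errorSet (A : SwissCheese) : Set ℂ :=
  (⋃ m ∈ A.sig, ⋃ n ∈ A.sig, ⋃ _ : m ≠ n,
      closedBall (A.a m) (A.r m) ∩ closedBall (A.a n) (A.r n)) ∪
    ⋃ n ∈ A.sig, (ball (A.a 0) (A.r 0))ᶜ ∩ closedBall (A.a n) (A.r n)

/-- A Swiss cheese set is compact. -/
instance (A : SwissCheese) : CompactSpace A.cheeseSet :=
  isCompact_iff_compactSpace.mp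
    ((isCompact_closedBall _ _).diff (isOpen_biUnion fun _ _ => isOpen_ball))

end SwissCheese

/-- every abstract Swiss cheese with `ρ(A) < ∞` admits a redundancy-free
version `B` with non-increasing radii, `ρ(B) ≤ ρ(A)`, the same Swiss cheese set, the same
outer closed disk, and `ρ_U(B) ≤ ρ_U(A)` for all open `U`. -/
lemma radius_le {a b : ℂ} {r s : ℝ} (hr : 0 < r) (h : ball a r ⊆ ball b s) : r ≤ s := by
  by_contra hc
  push_neg at hc
  have hs : 0 < s := lt_of_le_of_lt dist_nonneg (h (mem_ball_self hr))
  set t : ℝ := (r + s) / 2 with ht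
  have ht1 : t < r := by rw [ht]; linarith
  have ht2 : s < t := by rw [ht]; linarith
  have h0 : 0 < t := by positivity
  have m1 : a + (t:ℂ) ∈ ball a r := by
    simp [mem_ball, dist_eq_norm, abs_of_pos h0, ht1]
  have m2 : a - (t:ℂ) ∈ ball a r := by
    simp [mem_ball, dist_eq_norm, abs_of_pos h0, ht1]
  have d1 := mem_ball.mp (h m1)
  have d2 := mem_ball.mp (h m2)
  have dd : dist (a + (t:ℂ)) (a - (t:ℂ)) = 2 * t := by
    rw [dist_eq_norm]
    have e : (a + (t:ℂ)) - (a - t) = ((2 * t : ℝ) : ℂ) := by push_cast; ring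
    rw [e, Complex.norm_real, Real.norm_of_nonneg (by positivity)]
  have := dist_triangle (a + (t:ℂ)) b (a - (t:ℂ))
  rw [dd, dist_comm b] at this
  linarith

lemma greedy (r : ℕ → ℝ) (T : Set ℕ) (hpos : ∀ t ∈ T, 0 < r t)
    (hfin : ∀ ε : ℝ, 0 < ε → {n | ε ≤ r n}.Finite) :
    ∃ c : ℕ → Option ℕ,
      (∀ n t, c n = some t → t ∈ T) ∧
      (∀ m n t, c m = some t → c n = some t → m = n) ∧
      (∀ t ∈ T, ∃ n, c n = some t) ∧
      Antitone (fun n => (c n).elim 0 r) := by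
  classical
  have hmax : ∀ S : Set ℕ, S ⊆ T → S.Nonempty → ∃ t, t ∈ S ∧ ∀ u ∈ S, r u ≤ r t := by
    rintro S hST ⟨t0, ht0⟩
    have hpt0 : 0 < r t0 := hpos t0 (hST ht0)
    have hF : {u | u ∈ S ∧ r t0 ≤ r u}.Finite :=
      (hfin (r t0) hpt0).subset (fun u hu => hu.2)
    obtain ⟨t, htF, htm⟩ := Set.Finite.exists_maximalFor r _ hF ⟨t0, ht0, le_rfl⟩
    refine ⟨t, htF.1, fun u hu => ?_⟩
    rcases le_total (r u) (r t) with h | h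
    · exact h
    · rcases le_total (r t0) (r u) with h2 | h2
      · exact htm ⟨hu, h2⟩ h
      · exact h2.trans htF.2
  have hmax' : ∀ S : Set ℕ, ∃ t, (S ⊆ T ∧ S.Nonempty) → t ∈ S ∧ ∀ u ∈ S, r u ≤ r t := by
    intro S
    by_cases h : S ⊆ T ∧ S.Nonempty
    · obtain ⟨t, ht⟩ := hmax S h.1 h.2
      exact ⟨t, fun _ => ht⟩
    · exact ⟨0, fun hh => absurd hh h⟩
  choose Φ hΦ using hmax'
  let R : ℕ → Set ℕ := fun n => Nat.rec T (fun _ S => S \ {Φ S}) n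
  have hR0 : R 0 = T := rfl
  have hRsucc : ∀ n, R (n + 1) = R n \ {Φ (R n)} := fun _ => rfl
  have hRT : ∀ n, R n ⊆ T := by
    intro n
    induction n with
    | zero => exact subset_rfl
    | succ m ih => exact (diff_subset).trans ih
  have hRmono : ∀ n, R (n + 1) ⊆ R n := fun n => diff_subset
  have hRle : ∀ m n, m ≤ n → R n ⊆ R m := by
    intro m n h
    induction h with
    | refl => exact subset_rfl
    | step h ih => exact (hRmono _).trans ih
  let c : ℕ → Option ℕ := fun n => if h : (R n).Nonempty then some (Φ (R n)) else none
  have hcdef : ∀ n, c n = if (R n).Nonempty then some (Φ (R n)) else none := by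
    intro n; simp [c]
  have hcsome : ∀ n t, c n = some t → (R n).Nonempty ∧ t = Φ (R n) := by
    intro n t h
    rw [hcdef n] at h
    split_ifs at h with hne
    · exact ⟨hne, (Option.some_injective _ h).symm⟩
  have hΦspec : ∀ n, (R n).Nonempty → Φ (R n) ∈ R n ∧ ∀ u ∈ R n, r u ≤ r (Φ (R n)) :=
    fun n hne => hΦ (R n) ⟨hRT n, hne⟩
  have hnotmem : ∀ n, Φ (R n) ∉ R (n + 1) := by
    intro n
    rw [hRsucc]
    exact fun h => h.2 rfl
  refine ⟨c, ?_, ?_, ?_, ?_⟩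
  · intro n t h
    obtain ⟨hne, rfl⟩ := hcsome n t h
    exact hRT n (hΦspec n hne).1
  · intro m n t hm hn
    by_contra hmn
    rcases Nat.lt_or_ge m n with h | h
    · obtain ⟨hnem, rfl⟩ := hcsome m t hm
      obtain ⟨hnen, he⟩ := hcsome n _ hn
      exact hnotmem m (hRle (m + 1) n h ((he ▸ (hΦspec n hnen).1)))
    · have h' : n < m := lt_of_le_of_ne h (fun e => hmn e.symm)
      obtain ⟨hnen, rfl⟩ := hcsome n t hn
      obtain ⟨hnem, he⟩ := hcsome m _ hm
      exact hnotmem n (hRle (n + 1) m h' ((he ▸ (hΦspec m hnem).1)))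
  · intro t htT
    by_contra hcon
    push_neg at hcon
    have htR : ∀ n, t ∈ R n := by
      intro n
      induction n with
      | zero => exact htT
      | succ m ih =>
        rw [hRsucc]
        refine ⟨ih, fun he => ?_⟩
        have hne : (R m).Nonempty := ⟨t, ih⟩
        apply hcon m
        rw [hcdef m, if_pos hne, ← (mem_singleton_iff.mp he)]
    have hd : Function.Injective (fun n => Φ (R n)) := by
      intro m n hmn
      have hmn' : Φ (R m) = Φ (R n) := hmn
      by_contra h
      rcases Nat.lt_or_ge m n with h' | h'
      · exact hnotmem m (hRle (m + 1) n h' (hmn' ▸ (hΦspec n ⟨t, htR n⟩).1))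
      · have h'' : n < m := lt_of_le_of_ne h' (fun e => h e.symm)
        exact hnotmem n (hRle (n + 1) m h'' (hmn' ▸ (hΦspec m ⟨t, htR m⟩).1))
    have hrange : Set.range (fun n => Φ (R n)) ⊆ {u | r t ≤ r u} := by
      rintro _ ⟨n, rfl⟩
      exact (hΦspec n ⟨t, htR n⟩).2 t (htR n)
    exact (infinite_range_of_injective hd) ((hfin (r t) (hpos t htT)).subset hrange)
  · refine antitone_nat_of_succ_le (fun n => ?_)
    by_cases h : (R (n + 1)).Nonempty
    · have hn : (R n).Nonempty := h.mono (hRmono n)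
      rw [hcdef (n+1), hcdef n, if_pos h, if_pos hn]
      exact (hΦspec n hn).2 _ (hRmono n (hΦspec (n+1) h).1)
    · rw [hcdef (n+1), if_neg h]
      by_cases hn : (R n).Nonempty
      · rw [hcdef n, if_pos hn]
        exact (hpos _ (hRT n (hΦspec n hn).1)).le
      · rw [hcdef n, if_neg hn]

theorem stmt_3 (A : SwissCheese) (hA : A.RadSummable) :
    ∃ B : SwissCheese, B.IsRedundancyFree ∧ B.RadSummable ∧
      (Antitone fun n => B.r (n + 1)) ∧ B.radSum ≤ A.radSum ∧
      B.cheeseSet = A.cheeseSet ∧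
      Metric.closedBall (B.a 0) (B.r 0) = Metric.closedBall (A.a 0) (A.r 0) ∧
      ∀ U : Set ℂ, IsOpen U → B.rhoU U ≤ A.rhoU U := by
  classical
  have hsumA : Summable A.r := (summable_nat_add_iff 1).mp hA
  have finite_ge : ∀ ε : ℝ, 0 < ε → {n | ε ≤ A.r n}.Finite := by
    intro ε hε
    have h3 : ∀ᶠ n in Filter.cofinite, A.r n < ε :=
      hsumA.tendsto_cofinite_zero.eventually_lt_const hε
    exact (Filter.eventually_cofinite.mp h3).subset (fun n hn => not_lt.mpr hn)
  let T : Set ℕ := {n | n ∈ A.sig ∧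
    (ball (A.a n) (A.r n) ∩ closedBall (A.a 0) (A.r 0)).Nonempty ∧
    (∀ p ∈ A.sig, ball (A.a n) (A.r n) ⊆ ball (A.a p) (A.r p) →
      ball (A.a n) (A.r n) = ball (A.a p) (A.r p)) ∧
    (∀ j ∈ A.sig, ball (A.a j) (A.r j) = ball (A.a n) (A.r n) → n ≤ j)}
  have hTsig : ∀ t ∈ T, t ∈ A.sig := fun t ht => ht.1
  have hTpos : ∀ t ∈ T, 0 < A.r t := fun t ht => ht.1.2
  -- coverage lemma
  have cover : ∀ k ∈ A.sig, (ball (A.a k) (A.r k) ∩ closedBall (A.a 0) (A.r 0)).Nonempty →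
      ∃ t ∈ T, ball (A.a k) (A.r k) ⊆ ball (A.a t) (A.r t) := by
    intro k hk hmeet
    have hrk : 0 < A.r k := hk.2
    have hCfin : {n | n ∈ A.sig ∧ ball (A.a k) (A.r k) ⊆ ball (A.a n) (A.r n)}.Finite :=
      (finite_ge (A.r k) hrk).subset (fun n hn => radius_le hrk hn.2)
    obtain ⟨m, hmC, hmmax⟩ := Set.Finite.exists_maximalFor
      (fun n => ball (A.a n) (A.r n)) _ hCfin ⟨k, hk, subset_rfl⟩
    have hmax : ∀ p ∈ A.sig, ball (A.a m) (A.r m) ⊆ ball (A.a p) (A.r p) →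
        ball (A.a m) (A.r m) = ball (A.a p) (A.r p) := by
      intro p hp hsub
      exact hsub.antisymm (hmmax ⟨hp, hmC.2.trans hsub⟩ hsub)
    have hDne : {j | j ∈ A.sig ∧ ball (A.a j) (A.r j) = ball (A.a m) (A.r m)}.Nonempty :=
      ⟨m, hmC.1, rfl⟩
    set t := sInf {j | j ∈ A.sig ∧ ball (A.a j) (A.r j) = ball (A.a m) (A.r m)} with htdef
    have htD := Nat.sInf_mem hDne
    have hballs : ball (A.a t) (A.r t) = ball (A.a m) (A.r m) := htD.2
    obtain ⟨x, hx1, hx2⟩ := hmeet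
    refine ⟨t, ⟨htD.1, ⟨x, hballs ▸ hmC.2 hx1, hx2⟩, ?_, ?_⟩, hballs ▸ hmC.2⟩
    · intro p hp hsub
      rw [hballs] at hsub ⊢
      exact hmax p hp hsub
    · intro j hj hjball
      exact Nat.sInf_le ⟨hj, hjball.trans hballs⟩
  obtain ⟨c, hc1, hc2, hc3, hc4⟩ := greedy A.r T hTpos finite_ge
  let B : SwissCheese :=
    ⟨fun n => Nat.casesOn n (A.a 0) (fun m => (c m).elim (A.a 0) A.a),
     fun n => Nat.casesOn n (A.r 0) (fun m => (c m).elim 0 A.r),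
     by
      intro n
      cases n with
      | zero => exact A.r_nonneg 0
      | succ m =>
        show (0:ℝ) ≤ (c m).elim 0 A.r
        cases c m with
        | none => exact le_rfl
        | some t => exact A.r_nonneg t⟩
  have hBa : ∀ m, B.a (m + 1) = (c m).elim (A.a 0) A.a := fun _ => rfl
  have hBr : ∀ m, B.r (m + 1) = (c m).elim 0 A.r := fun _ => rfl
  have hBr0 : B.r 0 = A.r 0 := rfl
  have hBa0 : B.a 0 = A.a 0 := rfl
  have hBsome : ∀ m t, c m = some t → B.a (m + 1) = A.a t ∧ B.r (m + 1) = A.r t := by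
    intro m t h
    rw [hBa, hBr, h]
    exact ⟨rfl, rfl⟩
  have hBsig : ∀ k ∈ B.sig, ∃ m t, k = m + 1 ∧ c m = some t ∧ t ∈ T ∧
      B.a k = A.a t ∧ B.r k = A.r t := by
    rintro k ⟨hk1, hk2⟩
    obtain ⟨m, rfl⟩ : ∃ m, k = m + 1 := ⟨k - 1, (Nat.succ_pred_eq_of_pos hk1).symm⟩
    cases hcm : c m with
    | none => rw [hBr, hcm] at hk2; exact absurd hk2 (by simp)
    | some t =>
      obtain ⟨ha, hrr⟩ := hBsome m t hcm
      exact ⟨m, t, rfl, hcm, hc1 m t hcm, ha, hrr⟩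
  -- summability of B radii with bound
  have hval : (fun n => B.r (n + 1)) = fun n => (c n).elim 0 A.r := funext hBr
  have hTsub : Summable (fun t : T => A.r t) := hsumA.subtype T
  have hT_le : (∑' t : T, A.r t) ≤ A.radSum := by
    refine hTsub.tsum_le_tsum_of_inj (fun t : T => (t : ℕ) - 1) ?_ (fun _ _ => A.r_nonneg _)
      (fun t => ?_) hA
    · intro x y hxy
      have hxy' : (x : ℕ) - 1 = (y : ℕ) - 1 := hxy
      have hx1 : 1 ≤ (x : ℕ) := (hTsig _ x.2).1
      have hy1 : 1 ≤ (y : ℕ) := (hTsig _ y.2).1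
      have : (x : ℕ) = (y : ℕ) := by omega
      exact Subtype.ext this
    · have hx1 : 1 ≤ (t : ℕ) := (hTsig _ t.2).1
      have : (t : ℕ) - 1 + 1 = (t : ℕ) := by omega
      rw [this]
  have key : ∀ N : ℕ, ∑ i ∈ Finset.range N, (c i).elim 0 A.r ≤ ∑' t : T, A.r t := by
    intro N
    have step1 : ∑ i ∈ Finset.range N, (c i).elim 0 A.r =
        ∑ i ∈ (Finset.range N).filter (fun i => (c i).isSome), (c i).elim 0 A.r := by
      refine (Finset.sum_subset (Finset.filter_subset _ _) ?_).symm
      intro i hiN hi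
      simp only [Finset.mem_filter, not_and] at hi
      cases hcm : c i with
      | none => rfl
      | some t => exact absurd (by rw [hcm]; rfl) (hi hiN)
    rw [step1]
    set F := (Finset.range N).filter (fun i => (c i).isSome) with hF
    have hg : ∀ i ∈ F, (c i).elim 0 A.r = A.r ((c i).getD 0) ∧ (c i).getD 0 ∈ T := by
      intro i hi
      rw [hF, Finset.mem_filter] at hi
      cases hcm : c i with
      | none => rw [hcm] at hi; simp at hi
      | some t => exact ⟨rfl, hc1 i t hcm⟩
    have hinj : ∀ x ∈ F, ∀ y ∈ F, (c x).getD 0 = (c y).getD 0 → x = y := by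
      intro x hx y hy hxy
      rw [hF, Finset.mem_filter] at hx hy
      obtain ⟨t, ht⟩ := Option.isSome_iff_exists.mp hx.2
      obtain ⟨u, hu⟩ := Option.isSome_iff_exists.mp hy.2
      rw [ht, hu] at hxy
      simp only [Option.getD_some] at hxy
      exact hc2 x y t ht (by rw [hu, hxy])
    have hsubT : ∀ j ∈ F.image (fun i => (c i).getD 0), j ∈ T := by
      simp only [Finset.mem_image]
      rintro j ⟨i, hi, rfl⟩
      exact (hg i hi).2
    have heq : ∑ x ∈ (F.image fun i => (c i).getD 0).subtype (· ∈ T), A.r (x : ℕ)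
        = ∑ j ∈ F.image (fun i => (c i).getD 0), A.r j := by
      rw [Finset.sum_subtype_eq_sum_filter, Finset.filter_true_of_mem hsubT]
    calc ∑ i ∈ F, (c i).elim 0 A.r
        = ∑ i ∈ F, A.r ((c i).getD 0) := Finset.sum_congr rfl (fun i hi => (hg i hi).1)
      _ = ∑ j ∈ F.image (fun i => (c i).getD 0), A.r j := (Finset.sum_image hinj).symm
      _ = ∑ x ∈ (F.image fun i => (c i).getD 0).subtype (· ∈ T), A.r (x : ℕ) := heq.symm
      _ ≤ ∑' t : T, A.r t := hTsub.sum_le_tsum _ (fun t _ => A.r_nonneg t)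
  have hsummB : Summable fun n => B.r (n + 1) := by
    rw [hval]
    exact summable_of_sum_range_le
      (fun n => by cases hcn : c n with
        | none => exact le_rfl
        | some t => exact A.r_nonneg t)
      (fun N => (key N).trans hT_le)
  have hradle : B.radSum ≤ A.radSum := by
    unfold SwissCheese.radSum
    rw [hval] at hsummB ⊢
    exact hsummB.tsum_le_of_sum_range_le (fun N => (key N).trans hT_le)
  refine ⟨B, ?_, hsummB, ?_, hradle, ?_, rfl, ?_⟩
  · -- redundancy-free
    intro k hk
    obtain ⟨m, t, rfl, hcm, htT, hak, hrk⟩ := hBsig k hk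
    constructor
    · rw [hak, hrk, hBa0, hBr0]
      exact htT.2.1
    · intro l hl hlk hsub
      obtain ⟨m', u, rfl, hcm', huT, hal, hrl⟩ := hBsig l hl
      rw [hak, hrk, hal, hrl] at hsub
      have heq : ball (A.a t) (A.r t) = ball (A.a u) (A.r u) :=
        htT.2.2.1 u (hTsig u huT) hsub
      have htu : t = u := le_antisymm (htT.2.2.2 u (hTsig u huT) heq.symm)
        (huT.2.2.2 t (hTsig t htT) heq)
      have hmm : m = m' := hc2 m m' t hcm (by rw [hcm', htu])
      exact hlk (by rw [hmm])
  · -- antitone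
    rw [hval]; exact hc4
  · -- cheeseSet
    have hsub1 : ∀ n ∈ Ici (1:ℕ), ball (B.a n) (B.r n) ⊆ ⋃ k ∈ Ici (1:ℕ), ball (A.a k) (A.r k) := by
      intro n hn
      obtain ⟨m, rfl⟩ : ∃ m, n = m + 1 := ⟨n - 1, (Nat.succ_pred_eq_of_pos hn).symm⟩
      cases hcm : c m with
      | none =>
        rw [hBr m, hcm]
        simp
      | some t =>
        obtain ⟨ha, hrr⟩ := hBsome m t hcm
        rw [ha, hrr]
        intro y hy
        exact mem_biUnion (show t ∈ Ici 1 from (hTsig t (hc1 m t hcm)).1) hy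
    have hsub2 : ∀ x ∈ closedBall (A.a 0) (A.r 0),
        x ∈ ⋃ n ∈ Ici (1:ℕ), ball (A.a n) (A.r n) →
        x ∈ ⋃ n ∈ Ici (1:ℕ), ball (B.a n) (B.r n) := by
      intro x hxc hx
      obtain ⟨n, hn1, hxn⟩ := mem_iUnion₂.mp hx
      have hrn : 0 < A.r n := lt_of_le_of_lt dist_nonneg (mem_ball.mp hxn)
      obtain ⟨t, htT, hsub⟩ := cover n ⟨hn1, hrn⟩ ⟨x, hxn, hxc⟩
      obtain ⟨m, hcm⟩ := hc3 t htT
      obtain ⟨ha, hrr⟩ := hBsome m t hcm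
      exact mem_iUnion₂.mpr ⟨m + 1, Nat.succ_le_succ (Nat.zero_le m),
        by rw [ha, hrr]; exact hsub hxn⟩
    unfold SwissCheese.cheeseSet
    ext x
    constructor
    · rintro ⟨hx, hnx⟩
      exact ⟨hx, fun hmem => hnx (hsub2 x hx hmem)⟩
    · rintro ⟨hx, hnx⟩
      refine ⟨hx, fun hmem => hnx ?_⟩
      obtain ⟨n, hn1, hxn⟩ := mem_iUnion₂.mp hmem
      exact hsub1 n hn1 hxn
  · -- rhoU
    intro U hU
    have hBsumm : Summable B.r := (summable_nat_add_iff 1).mp hsummB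
    have hfB : Summable fun x : B.HSet U => B.r x := hBsumm.subtype _
    have hgA : Summable fun x : A.HSet U => A.r x := hsumA.subtype _
    have hmapex : ∀ x : ↥(B.HSet U), ∃ t : ↥(A.HSet U),
        c ((x : ℕ) - 1) = some (t : ℕ) ∧ B.r x = A.r t := by
      rintro ⟨k, hk1, hk2⟩
      obtain ⟨m, t, rfl, hcm, htT, hak, hrk⟩ := hBsig k hk1
      refine ⟨⟨t, hTsig t htT, ?_⟩, ?_, hrk⟩
      · rw [← hak, ← hrk]; exact hk2
      · simpa using hcm
    choose ι hι1 hι2 using hmapex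
    have hinj : Function.Injective ι := by
      intro x y hxy
      have h1 := hι1 x
      have h2 := hι1 y
      rw [hxy] at h1
      have h3 := hc2 _ _ _ h1 h2
      have hx1 : 1 ≤ (x : ℕ) := x.2.1.1
      have hy1 : 1 ≤ (y : ℕ) := y.2.1.1
      exact Subtype.ext (by omega)
    exact hfB.tsum_le_tsum_of_inj ι hinj (fun a _ => A.r_nonneg _) (fun x => (hι2 x).le) hgA
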